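/- Let I be an open real interval and f : I → ℝ a twice differentiable function with f(u) > 0 for all u ∈ I. Then f satisfies the differential equation f(u)·f''(u) = 1 − f'(u)² for all u ∈ I if and only if there exist real constants c and d such that f(u)² = u² + 2cu + d for all u ∈ I, i.e. f(u) = √(u² + 2cu + d). (This is case (i) of the classification of meridian surfaces with parallel normal bundle, where the condition g' + f·κ_m = 0 is equivalent to 1 − f'² − f·f'' = 0.) -/

import Mathlib

/-- A function with everywhere-zero derivative on a convex set is constant there. -/
lemma const_of_hasDerivAt_zero {I : Set ℝ} (hconv : Convex ℝ I) {F : ℝ → ℝ}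
    (hF : ∀ x ∈ I, HasDerivAt F 0 x) :
    ∀ x ∈ I, ∀ y ∈ I, F x = F y := by
  intro x hx y hy
  have h := hconv.norm_image_sub_le_of_norm_hasDerivWithin_le
    (f' := fun _ => (0 : ℝ)) (C := 0)
    (fun z hz => (hF z hz).hasDerivWithinAt) (fun z _ => by simp) hx hy
  rw [zero_mul] at h
  have : F y - F x = 0 := norm_le_zero_iff.mp h
  linarith

/-- Case (i) of the classification of meridian surfaces with parallel normal bundle:
a positive twice differentiable function `f` on an open interval satisfies
`f·f'' = 1 − f'²` if and only if `f(u)² = u² + 2cu + d`, i.e. `f(u) = √(u² + 2cu + d)`,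
for some constants `c`, `d`. -/
theorem parallel_case_i_ode
    (I : Set ℝ) (hI : IsOpen I) (hIc : I.OrdConnected)
    (f : ℝ → ℝ)
    (hf1 : ∀ u ∈ I, DifferentiableAt ℝ f u)
    (hf2 : ∀ u ∈ I, DifferentiableAt ℝ (deriv f) u)
    (hfpos : ∀ u ∈ I, 0 < f u) :
    (∀ u ∈ I, f u * deriv (deriv f) u = 1 - (deriv f u) ^ 2) ↔
      (∃ c d : ℝ, ∀ u ∈ I,
        (f u) ^ 2 = u ^ 2 + 2 * c * u + d ∧
        f u = Real.sqrt (u ^ 2 + 2 * c * u + d)) := by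
  have hconv : Convex ℝ I := convex_iff_ordConnected.mpr hIc
  constructor
  · intro hode
    rcases I.eq_empty_or_nonempty with hE | ⟨u₀, hu₀⟩
    · exact ⟨0, 0, by simp [hE]⟩
    set c : ℝ := f u₀ * deriv f u₀ - u₀ with hc
    -- F u = f u * f' u - u has zero derivative on I
    have hF0 : ∀ x ∈ I, HasDerivAt (fun y => f y * deriv f y - y) 0 x := by
      intro x hx
      have h1 := ((hf1 x hx).hasDerivAt.mul (hf2 x hx).hasDerivAt).sub (hasDerivAt_id x)
      have : deriv f x * deriv f x + f x * deriv (deriv f) x - 1 = 0 := by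
        have := hode x hx; nlinarith
      rwa [this] at h1
    have hFconst := const_of_hasDerivAt_zero hconv hF0
    have hFc : ∀ x ∈ I, f x * deriv f x = x + c := by
      intro x hx
      have := hFconst x hx u₀ hu₀
      simp only [hc]; linarith
    set d : ℝ := f u₀ ^ 2 - u₀ ^ 2 - 2 * c * u₀ with hd
    have hG0 : ∀ x ∈ I, HasDerivAt (fun y => f y ^ 2 - y ^ 2 - 2 * c * y) 0 x := by
      intro x hx
      have h1 := (((hf1 x hx).hasDerivAt.pow 2).sub ((hasDerivAt_pow 2 x))).sub
        ((hasDerivAt_id x).const_mul (2 * c))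
      have h1' : HasDerivAt (fun y => f y ^ 2 - y ^ 2 - 2 * c * y)
          (((2 : ℕ) : ℝ) * f x ^ (2 - 1) * deriv f x - ((2 : ℕ) : ℝ) * x ^ (2 - 1) - 2 * c * 1)
          x := h1
      have hz : (((2 : ℕ) : ℝ) * f x ^ (2 - 1) * deriv f x - ((2 : ℕ) : ℝ) * x ^ (2 - 1)
          - 2 * c * 1) = 0 := by
        have := hFc x hx; push_cast; nlinarith
      rwa [hz] at h1'
    have hGconst := const_of_hasDerivAt_zero hconv hG0
    refine ⟨c, d, fun u hu => ?_⟩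
    have hsq : f u ^ 2 = u ^ 2 + 2 * c * u + d := by
      have := hGconst u hu u₀ hu₀
      simp only [hd] at *; linarith
    refine ⟨hsq, ?_⟩
    rw [← hsq, Real.sqrt_sq (hfpos u hu).le]
  · rintro ⟨c, d, hcd⟩
    -- first derive f * f' = u + c on I
    have hFc : ∀ u ∈ I, f u * deriv f u = u + c := by
      intro u hu
      have hev : (fun y => f y ^ 2) =ᶠ[nhds u] fun y => y ^ 2 + 2 * c * y + d :=
        Filter.eventuallyEq_of_mem (hI.mem_nhds hu) (fun y hy => (hcd y hy).1)
      have hde := hev.deriv_eq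
      have h1 : HasDerivAt (fun y => f y ^ 2)
          ((2 : ℕ) * f u ^ (2 - 1) * deriv f u) u := (hf1 u hu).hasDerivAt.pow 2
      have h2 : HasDerivAt (fun y : ℝ => y ^ 2 + 2 * c * y + d) (2 * u + 2 * c) u := by
        have := ((hasDerivAt_pow 2 u).add ((hasDerivAt_id u).const_mul (2 * c))).add_const d
        exact this.congr_deriv (by push_cast; ring)
      have := h1.deriv ▸ h2.deriv ▸ hde
      push_cast at this; nlinarith
    intro u hu
    have hev : (fun y => f y * deriv f y) =ᶠ[nhds u] fun y => y + c :=
      Filter.eventuallyEq_of_mem (hI.mem_nhds hu) (fun y hy => hFc y hy)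
    have hde := hev.deriv_eq
    have h1 : HasDerivAt (fun y => f y * deriv f y)
        (deriv f u * deriv f u + f u * deriv (deriv f) u) u :=
      (hf1 u hu).hasDerivAt.mul (hf2 u hu).hasDerivAt
    have h2 : HasDerivAt (fun y : ℝ => y + c) 1 u := (hasDerivAt_id u).add_const c
    have := h1.deriv ▸ h2.deriv ▸ hde
    nlinarith
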